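/- In OF_n, two elements are J-equivalent if and only if they have the same rank (image cardinality); equivalently f_{X,Y} J f_{Z,W} iff |X| = |Z|. -/

import Mathlib

/-- The order-preserving map `f_{X,Y} : [n+1] → [n+1]` (with top element
`Fin.last n` playing the role of `n+1`, and `X, Y ⊆ [n]` via `Fin.castSucc`)
determined by equal-size subsets `X, Y`: it sends the interval
`(x_{i-1}, x_i]` to `y_i` and everything above `x_l` to the top. -/
def fXY (n : ℕ) (X Y : Finset (Fin n)) (_h : X.card = Y.card) :
    Fin (n + 1) → Fin (n + 1) := fun x =>
  if hk : (X.filter fun t => t.castSucc < x).card < Y.card then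
    (Y.orderEmbOfFin rfl ⟨_, hk⟩).castSucc
  else Fin.last n

theorem fXY_monotone (n : ℕ) (X Y : Finset (Fin n)) (h : X.card = Y.card) :
    Monotone (fXY n X Y h) := by
  intro a b hab
  unfold fXY
  have hle : (X.filter fun t => t.castSucc < a).card ≤
      (X.filter fun t => t.castSucc < b).card :=
    Finset.card_le_card (Finset.monotone_filter_right X
      (fun t _ ht => lt_of_lt_of_le ht hab))
  by_cases ha : (X.filter fun t => t.castSucc < a).card < Y.card
  · by_cases hb : (X.filter fun t => t.castSucc < b).card < Y.card
    · rw [dif_pos ha, dif_pos hb]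
      exact Fin.castSucc_le_castSucc_iff.mpr
        ((Y.orderEmbOfFin rfl).monotone (by exact hle))
    · rw [dif_pos ha, dif_neg hb]; exact Fin.le_last _
  · have hb : ¬(X.filter fun t => t.castSucc < b).card < Y.card := by omega
    rw [dif_neg ha, dif_neg hb]

theorem fXY_last (n : ℕ) (X Y : Finset (Fin n)) (h : X.card = Y.card) :
    fXY n X Y h (Fin.last n) = Fin.last n := by
  unfold fXY
  rw [Finset.filter_true_of_mem (fun t _ => Fin.castSucc_lt_last t), h,
    dif_neg (lt_irrefl _)]

/-- The monoid `OF_{n+1}` of order-preserving self-maps of `[n+1]` fixing the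
top element, as a submonoid of `Function.End (Fin (n+1))`. -/
def OFmon (n : ℕ) : Submonoid (Function.End (Fin (n + 1))) where
  carrier := {f | Monotone f ∧ f (Fin.last n) = Fin.last n}
  mul_mem' := by
    rintro f g ⟨hf1, hf2⟩ ⟨hg1, hg2⟩
    refine ⟨hf1.comp hg1, ?_⟩
    show f (g (Fin.last n)) = Fin.last n
    rw [hg2, hf2]
  one_mem' := ⟨monotone_id, rfl⟩

/-- `f_{X,Y}` as an element of the monoid `OF_{n+1}`. -/
def FXY (n : ℕ) (X Y : Finset (Fin n)) (h : X.card = Y.card) : OFmon n :=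
  ⟨fXY n X Y h, fXY_monotone n X Y h, fXY_last n X Y h⟩

/-- Green's `R`-equivalence on a monoid. -/
def RRel {M : Type*} [Monoid M] (a b : M) : Prop :=
  (∃ u, a * u = b) ∧ ∃ u, b * u = a

/-- Green's `L`-equivalence on a monoid. -/
def LRel {M : Type*} [Monoid M] (a b : M) : Prop :=
  (∃ u, u * a = b) ∧ ∃ u, u * b = a

/-- Green's `J`-equivalence on a monoid. -/
def JRel {M : Type*} [Monoid M] (a b : M) : Prop :=
  (∃ u v, u * a * v = b) ∧ ∃ u v, u * b * v = a

/-- In `OF_{n+1}`, two elements are `J`-equivalent iff they have the same rank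
(image cardinality); equivalently `f_{X,Y} J f_{Z,W}` iff `|X| = |Z|`. -/

noncomputable def transfer {n : ℕ} (A B : Finset (Fin (n + 1))) (k : ℕ)
    (hA : A.card = k) (hB : B.card = k) (a : Fin (n + 1)) : Fin (n + 1) :=
  if ha : a ∈ A then ((B.orderIsoOfFin hB) ((A.orderIsoOfFin hA).symm ⟨a, ha⟩) : Fin (n + 1))
  else Fin.last n

lemma transfer_mem {n : ℕ} {A B : Finset (Fin (n + 1))} {k : ℕ} {hA : A.card = k}
    {hB : B.card = k} {a : Fin (n + 1)} (ha : a ∈ A) : transfer A B k hA hB a ∈ B := by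
  rw [transfer, dif_pos ha]; exact Finset.coe_mem _

lemma transfer_mono {n : ℕ} {A B : Finset (Fin (n + 1))} {k : ℕ} {hA : A.card = k}
    {hB : B.card = k} {a a' : Fin (n + 1)} (ha : a ∈ A) (ha' : a' ∈ A) (hle : a ≤ a') :
    transfer A B k hA hB a ≤ transfer A B k hA hB a' := by
  unfold transfer; rw [dif_pos ha, dif_pos ha']
  exact Subtype.coe_le_coe.mpr ((B.orderIsoOfFin hB).monotone
    ((A.orderIsoOfFin hA).symm.monotone (Subtype.mk_le_mk.mpr hle)))

lemma transfer_transfer {n : ℕ} {A B : Finset (Fin (n + 1))} {k : ℕ} {hA : A.card = k}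
    {hB : B.card = k} {a : Fin (n + 1)} (ha : a ∈ A) :
    transfer B A k hB hA (transfer A B k hA hB a) = a := by
  unfold transfer; rw [dif_pos ha, dif_pos (Finset.coe_mem _)]
  rw [Subtype.coe_eta]; simp

lemma transfer_last {n : ℕ} {A B : Finset (Fin (n + 1))} {k : ℕ} {hA : A.card = k}
    {hB : B.card = k} (hlA : Fin.last n ∈ A) (hlB : Fin.last n ∈ B) :
    transfer A B k hA hB (Fin.last n) = Fin.last n := by
  refine le_antisymm (Fin.le_last _) ?_
  rw [transfer, dif_pos hlA]
  have key : ∀ j : Fin k, j ≤ (A.orderIsoOfFin hA).symm ⟨Fin.last n, hlA⟩ := by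
    intro j
    have : (A.orderIsoOfFin hA) j ≤ ⟨Fin.last n, hlA⟩ :=
      Subtype.coe_le_coe.mp (Fin.le_last _)
    have h2 := (A.orderIsoOfFin hA).symm.monotone this
    rwa [OrderIso.symm_apply_apply] at h2
  have h2 := Subtype.coe_le_coe.mpr
    ((B.orderIsoOfFin hB).monotone (key ((B.orderIsoOfFin hB).symm ⟨Fin.last n, hlB⟩)))
  rwa [OrderIso.apply_symm_apply] at h2

lemma card_filter_lt_orderEmb {α : Type*} [LinearOrder α] (s : Finset α) (i : Fin s.card) :
    (s.filter (· < s.orderEmbOfFin rfl i)).card = i := by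
  have he : s.filter (· < s.orderEmbOfFin rfl i)
      = (Finset.Iio i).image (s.orderEmbOfFin rfl) := by
    ext y
    simp only [Finset.mem_filter, Finset.mem_image, Finset.mem_Iio]
    constructor
    · rintro ⟨hy, hlt⟩
      have : y ∈ Set.range (s.orderEmbOfFin rfl) := by
        rw [Finset.range_orderEmbOfFin]; exact hy
      obtain ⟨j, rfl⟩ := this
      exact ⟨j, (s.orderEmbOfFin rfl).lt_iff_lt.mp hlt, rfl⟩
    · rintro ⟨j, hj, rfl⟩
      exact ⟨Finset.orderEmbOfFin_mem s rfl j, (s.orderEmbOfFin rfl).lt_iff_lt.mpr hj⟩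
  rw [he, Finset.card_image_of_injective _ (s.orderEmbOfFin rfl).injective, Fin.card_Iio]

lemma image_fXY (n : ℕ) (X Y : Finset (Fin n)) (h : X.card = Y.card) :
    Finset.image (fXY n X Y h) Finset.univ
      = Y.image Fin.castSucc ∪ {Fin.last n} := by
  ext y
  simp only [Finset.mem_image, Finset.mem_univ, true_and, Finset.mem_union,
    Finset.mem_singleton]
  constructor
  · rintro ⟨x, rfl⟩
    unfold fXY
    by_cases hk : (X.filter fun t => t.castSucc < x).card < Y.card
    · rw [dif_pos hk]
      exact Or.inl ⟨_, Finset.orderEmbOfFin_mem Y rfl _, rfl⟩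
    · rw [dif_neg hk]; exact Or.inr rfl
  · rintro (⟨b, hb, rfl⟩ | rfl)
    · -- b ∈ Y; find x with count = index of b
      have : b ∈ Set.range (Y.orderEmbOfFin rfl) := by
        rw [Finset.range_orderEmbOfFin]; exact hb
      obtain ⟨i, rfl⟩ := this
      -- take x = castSucc of the i-th element of X
      refine ⟨Fin.castSucc (X.orderEmbOfFin rfl (Fin.cast h.symm i)), ?_⟩
      have hcnt : (X.filter fun t =>
          t.castSucc < Fin.castSucc (X.orderEmbOfFin rfl (Fin.cast h.symm i))).card = i := by
        have : (X.filter fun t =>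
            t.castSucc < Fin.castSucc (X.orderEmbOfFin rfl (Fin.cast h.symm i)))
            = X.filter (· < X.orderEmbOfFin rfl (Fin.cast h.symm i)) := by
          apply Finset.filter_congr
          intro t _
          simp [Fin.castSucc_lt_castSucc_iff]
        rw [this, card_filter_lt_orderEmb]
        rfl
      unfold fXY
      have hk : (X.filter fun t =>
          t.castSucc < Fin.castSucc (X.orderEmbOfFin rfl (Fin.cast h.symm i))).card < Y.card := by
        rw [hcnt]; exact i.isLt
      rw [dif_pos hk]
      congr 1
      exact congrArg _ (Fin.ext hcnt)
    · refine ⟨Fin.last n, ?_⟩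
      unfold fXY
      rw [Finset.filter_true_of_mem (fun t _ => Fin.castSucc_lt_last t), h,
        dif_neg (lt_irrefl _)]

lemma card_image_fXY (n : ℕ) (X Y : Finset (Fin n)) (h : X.card = Y.card) :
    (Finset.image (fXY n X Y h) Finset.univ).card = X.card + 1 := by
  rw [image_fXY, Finset.card_union_of_disjoint, Finset.card_image_of_injective _
    (Fin.castSucc_injective n), Finset.card_singleton, h]
  simp only [Finset.disjoint_singleton_right, Finset.mem_image]
  rintro ⟨b, _, hb⟩
  exact absurd hb (Fin.ne_last_of_lt (Fin.castSucc_lt_last b))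

lemma rank_le_left {α : Type*} [Fintype α] [DecidableEq α] (u a : α → α) :
    (Finset.image (fun x => u (a x)) Finset.univ).card
      ≤ (Finset.image a Finset.univ).card := by
  calc (Finset.image (fun x => u (a x)) Finset.univ).card
      = ((Finset.image a Finset.univ).image u).card := by rw [Finset.image_image]; rfl
    _ ≤ _ := Finset.card_image_le

lemma rank_le_right {α : Type*} [Fintype α] [DecidableEq α] (a v : α → α) :
    (Finset.image (fun x => a (v x)) Finset.univ).card
      ≤ (Finset.image a Finset.univ).card := by
  apply Finset.card_le_card
  intro y hy
  simp only [Finset.mem_image, Finset.mem_univ, true_and] at hy ⊢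
  obtain ⟨x, hx⟩ := hy
  exact ⟨v x, hx⟩

lemma key (n : ℕ) (f g : Fin (n + 1) → Fin (n + 1)) (hfm : Monotone f)
    (hfl : f (Fin.last n) = Fin.last n) (hgm : Monotone g)
    (hgl : g (Fin.last n) = Fin.last n)
    (hcard : (Finset.image f Finset.univ).card = (Finset.image g Finset.univ).card) :
    ∃ u v : Fin (n + 1) → Fin (n + 1), Monotone u ∧ u (Fin.last n) = Fin.last n ∧
      Monotone v ∧ v (Fin.last n) = Fin.last n ∧ ∀ x, u (f (v x)) = g x := by
  set A := Finset.image f Finset.univ with hAdef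
  set B := Finset.image g Finset.univ with hBdef
  have hlA : Fin.last n ∈ A := Finset.mem_image.mpr ⟨Fin.last n, Finset.mem_univ _, hfl⟩
  have hlB : Fin.last n ∈ B := Finset.mem_image.mpr ⟨Fin.last n, Finset.mem_univ _, hgl⟩
  have hgB : ∀ x, g x ∈ B := fun x => Finset.mem_image.mpr ⟨x, Finset.mem_univ _, rfl⟩
  -- v : pick the largest preimage under f of (transfer B A) (g x)
  have hne : ∀ x : Fin (n + 1),
      (Finset.univ.filter fun t => f t = transfer B A A.card hcard.symm rfl (g x)).Nonempty := by
    intro x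
    have : transfer B A A.card hcard.symm rfl (g x) ∈ A := transfer_mem (hgB x)
    obtain ⟨t, _, ht⟩ := Finset.mem_image.mp this
    exact ⟨t, Finset.mem_filter.mpr ⟨Finset.mem_univ _, ht⟩⟩
  set v : Fin (n + 1) → Fin (n + 1) := fun x =>
    (Finset.univ.filter fun t => f t = transfer B A A.card hcard.symm rfl (g x)).max' (hne x)
    with hvdef
  have hfv : ∀ x, f (v x) = transfer B A A.card hcard.symm rfl (g x) := by
    intro x
    have := Finset.max'_mem _ (hne x)
    exact (Finset.mem_filter.mp this).2
  -- u : map y to the least element of A that is ≥ y, then transfer to B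
  have hne2 : ∀ y : Fin (n + 1), (A.filter fun a => y ≤ a).Nonempty :=
    fun y => ⟨Fin.last n, Finset.mem_filter.mpr ⟨hlA, Fin.le_last _⟩⟩
  set m : Fin (n + 1) → Fin (n + 1) := fun y => (A.filter fun a => y ≤ a).min' (hne2 y)
    with hmdef
  have hmA : ∀ y, m y ∈ A := fun y => (Finset.mem_filter.mp (Finset.min'_mem _ (hne2 y))).1
  have hmfix : ∀ a ∈ A, m a = a := by
    intro a ha
    refine le_antisymm (Finset.min'_le _ _ (Finset.mem_filter.mpr ⟨ha, le_refl a⟩)) ?_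
    exact (Finset.mem_filter.mp (Finset.min'_mem _ (hne2 a))).2
  have hmmono : Monotone m := by
    intro y y' hyy'
    apply Finset.min'_le
    refine Finset.mem_filter.mpr ⟨(Finset.mem_filter.mp (Finset.min'_mem _ (hne2 y'))).1, ?_⟩
    exact le_trans hyy' (Finset.mem_filter.mp (Finset.min'_mem _ (hne2 y'))).2
  set u : Fin (n + 1) → Fin (n + 1) := fun y => transfer A B A.card rfl hcard.symm (m y)
    with hudef
  refine ⟨u, v, ?_, ?_, ?_, ?_, ?_⟩
  · exact fun y y' h => transfer_mono (hmA y) (hmA y') (hmmono h)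
  · rw [hudef]; simp only []; rw [hmfix _ hlA]; exact transfer_last hlA hlB
  · -- v monotone
    intro x x' hxx'
    by_contra hcon
    push_neg at hcon
    have h1 := hfv x
    have h2 := hfv x'
    have hle : transfer B A A.card hcard.symm rfl (g x)
        ≤ transfer B A A.card hcard.symm rfl (g x') :=
      transfer_mono (hgB x) (hgB x') (hgm hxx')
    have hge : transfer B A A.card hcard.symm rfl (g x')
        ≤ transfer B A A.card hcard.symm rfl (g x) := by
      rw [← h1, ← h2]; exact hfm (le_of_lt hcon)
    have heq : transfer B A A.card hcard.symm rfl (g x)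
        = transfer B A A.card hcard.symm rfl (g x') := le_antisymm hle hge
    have : v x = v x' := by
      rw [hvdef]; simp only []
      congr 1
      · rw [heq]
    omega
  · -- v last = last
    refine le_antisymm (Fin.le_last _) ?_
    apply Finset.le_max'
    refine Finset.mem_filter.mpr ⟨Finset.mem_univ _, ?_⟩
    rw [hfl, hgl, transfer_last hlB hlA]
  · intro x
    rw [hudef]; simp only []
    rw [hfv x, hmfix _ (transfer_mem (hgB x)), transfer_transfer (hgB x)]

theorem statement14 (n : ℕ) :
    (∀ f g : OFmon n, JRel f g ↔
      (Finset.image f.1 Finset.univ).card = (Finset.image g.1 Finset.univ).card) ∧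
    (∀ (X Y Z W : Finset (Fin n)) (h1 : X.card = Y.card) (h2 : Z.card = W.card),
      JRel (FXY n X Y h1) (FXY n Z W h2) ↔ X.card = Z.card) := by
  have main : ∀ f g : OFmon n, JRel f g ↔
      (Finset.image f.1 Finset.univ).card = (Finset.image g.1 Finset.univ).card := by
    intro f g
    constructor
    · rintro ⟨⟨u, v, huv⟩, ⟨u', v', hvu⟩⟩
      have h1 : (Finset.image g.1 Finset.univ).card ≤ (Finset.image f.1 Finset.univ).card := by
        have he : g.1 = fun x => u.1 (f.1 (v.1 x)) := by rw [← huv]; rfl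
        rw [he]
        exact le_trans (rank_le_left u.1 (fun x => f.1 (v.1 x))) (rank_le_right f.1 v.1)
      have h2 : (Finset.image f.1 Finset.univ).card ≤ (Finset.image g.1 Finset.univ).card := by
        have he : f.1 = fun x => u'.1 (g.1 (v'.1 x)) := by rw [← hvu]; rfl
        rw [he]
        exact le_trans (rank_le_left u'.1 (fun x => g.1 (v'.1 x))) (rank_le_right g.1 v'.1)
      omega
    · intro hcard
      obtain ⟨u, v, hu1, hu2, hv1, hv2, huv⟩ :=
        key n f.1 g.1 f.2.1 f.2.2 g.2.1 g.2.2 hcard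
      obtain ⟨u', v', hu1', hu2', hv1', hv2', hvu⟩ :=
        key n g.1 f.1 g.2.1 g.2.2 f.2.1 f.2.2 hcard.symm
      refine ⟨⟨⟨u, hu1, hu2⟩, ⟨v, hv1, hv2⟩, ?_⟩, ⟨⟨u', hu1', hu2'⟩, ⟨v', hv1', hv2'⟩, ?_⟩⟩
      · exact Subtype.ext (funext huv)
      · exact Subtype.ext (funext hvu)
  refine ⟨main, ?_⟩
  intro X Y Z W h1 h2
  rw [main]
  show (Finset.image (fXY n X Y h1) Finset.univ).card
      = (Finset.image (fXY n Z W h2) Finset.univ).card ↔ _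
  rw [card_image_fXY, card_image_fXY]
  omega
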